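/- Let α ≥ 0 and β > 0 with α ≠ β, let T ≥ 0, let s₀ ∈ [0,T] and let y ∈ [0,1]. Then ∫_{s₀}^{T} e^{(β−α)(T−s)} / (β(1−y)e^{(β−α)(T−s)} + βy − α)² ds = (e^{(β−α)(T−s₀)} − 1) / ((β−α)² · (β(1−y)e^{(β−α)(T−s₀)} + βy − α)). -/

import Mathlib

open MeasureTheory Real

/-- Lemma A.2 (first part): for a birth-death process with death rate `α ≥ 0` and
birth rate `β > 0`, `α ≠ β`, for `0 ≤ s₀ ≤ T` and `y ∈ [0,1]`,
`∫_{s₀}^T e^{(β−α)(T−s)} / (β(1−y)e^{(β−α)(T−s)} + βy − α)² ds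
  = (e^{(β−α)(T−s₀)} − 1) / ((β−α)² (β(1−y)e^{(β−α)(T−s₀)} + βy − α))`. -/
theorem integral_birth_death_kernel
    (α β T s₀ y : ℝ) (hα : 0 ≤ α) (hβ : 0 < β) (hαβ : α ≠ β)
    (hT : 0 ≤ T) (hs₀ : s₀ ∈ Set.Icc 0 T) (hy : y ∈ Set.Icc (0 : ℝ) 1) :
    ∫ s in s₀..T,
        Real.exp ((β - α) * (T - s)) /
          (β * (1 - y) * Real.exp ((β - α) * (T - s)) + β * y - α) ^ 2
      = (Real.exp ((β - α) * (T - s₀)) - 1) /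
          ((β - α) ^ 2 *
            (β * (1 - y) * Real.exp ((β - α) * (T - s₀)) + β * y - α)) := by
  obtain ⟨hs0, hsT⟩ := hs₀
  obtain ⟨hy0, hy1⟩ := hy
  simp only [add_sub_assoc]
  set c : ℝ := β - α with hc
  set a : ℝ := β * (1 - y) with ha
  set b : ℝ := β * y - α with hb
  have hc0 : c ≠ 0 := sub_ne_zero.mpr (Ne.symm hαβ)
  have ha0 : 0 ≤ a := mul_nonneg hβ.le (by linarith)
  have hab : a + b = c := by rw [ha, hb, hc]; ring
  have hD : ∀ s ∈ Set.uIcc s₀ T, a * Real.exp (c * (T - s)) + b ≠ 0 := by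
    intro s hs
    rw [Set.uIcc_of_le hsT, Set.mem_Icc] at hs
    rcases lt_or_gt_of_ne hαβ with h | h
    · have hcpos : 0 < c := by rw [hc]; linarith
      have hexp : 1 ≤ Real.exp (c * (T - s)) :=
        Real.one_le_exp (by nlinarith)
      have : a ≤ a * Real.exp (c * (T - s)) := le_mul_of_one_le_right ha0 hexp
      have : 0 < a * Real.exp (c * (T - s)) + b := by linarith
      exact ne_of_gt this
    · have hcneg : c < 0 := by rw [hc]; linarith
      have hexp : Real.exp (c * (T - s)) ≤ 1 :=
        Real.exp_le_one_iff.mpr (by nlinarith)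
      have : a * Real.exp (c * (T - s)) ≤ a :=
        mul_le_of_le_one_right ha0 hexp
      have : a * Real.exp (c * (T - s)) + b < 0 := by linarith
      exact ne_of_lt this
  set F : ℝ → ℝ := fun s =>
    (1 - Real.exp (c * (T - s))) / (c ^ 2 * (a * Real.exp (c * (T - s)) + b))
    with hF
  have hderiv : ∀ s ∈ Set.uIcc s₀ T,
      HasDerivAt F (Real.exp (c * (T - s)) /
        (a * Real.exp (c * (T - s)) + b) ^ 2) s := by
    intro s hs
    have hDs := hD s hs
    have hE : HasDerivAt (fun s => Real.exp (c * (T - s)))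
        (-c * Real.exp (c * (T - s))) s := by
      have h1 : HasDerivAt (fun s : ℝ => c * (T - s)) (-c) s := by
        simpa using ((hasDerivAt_id s).const_sub T).const_mul c
      simpa [mul_comm, Function.comp_def] using (Real.hasDerivAt_exp (c * (T - s))).comp s h1
    have hN : HasDerivAt (fun s => 1 - Real.exp (c * (T - s)))
        (c * Real.exp (c * (T - s))) s := by
      simpa [Pi.sub_def] using (hasDerivAt_const s (1 : ℝ)).sub hE
    have hM : HasDerivAt (fun s => c ^ 2 * (a * Real.exp (c * (T - s)) + b))
        (c ^ 2 * (a * (-c * Real.exp (c * (T - s))))) s :=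
      ((hE.const_mul a).add_const b).const_mul (c ^ 2)
    have hM0 : c ^ 2 * (a * Real.exp (c * (T - s)) + b) ≠ 0 :=
      mul_ne_zero (pow_ne_zero 2 hc0) hDs
    have : HasDerivAt F _ s := hN.div hM hM0
    convert this using 1
    field_simp
    linear_combination
      (c ^ 3 * Real.exp (c * (T - s)) *
        (a * Real.exp (c * (T - s)) + b) ^ 2) * hab
  have hcont : ContinuousOn (fun s => Real.exp (c * (T - s)) /
      (a * Real.exp (c * (T - s)) + b) ^ 2) (Set.uIcc s₀ T) := by
    apply ContinuousOn.div
    · fun_prop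
    · fun_prop
    · intro s hs
      exact pow_ne_zero 2 (hD s hs)
  have key := intervalIntegral.integral_eq_sub_of_hasDerivAt hderiv
    hcont.intervalIntegrable
  rw [key]
  have hDs₀ := hD s₀ Set.left_mem_uIcc
  rw [hF]
  simp only
  rw [sub_self, mul_zero, Real.exp_zero]
  field_simp
  ring
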